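/- Let K be a field of characteristic p > 3 and f = x^3 + y^4 + y z^2 + a x y^3 ∈ K[[x,y,z]] for any a ∈ K. Then μ(f) = 10. -/

import Mathlib

open MvPowerSeries

noncomputable def pd {n : ℕ} {K : Type} [Field K] (i : Fin n)
    (f : MvPowerSeries (Fin n) K) : MvPowerSeries (Fin n) K :=
  fun m => ((m i + 1 : ℕ) : K) * MvPowerSeries.coeff (R := K) (m + Finsupp.single i 1) f

/-- The Milnor number: dimension of the quotient by the Jacobian ideal. -/
noncomputable def milnor {n : ℕ} (K : Type) [Field K] (f : MvPowerSeries (Fin n) K) : ℕ :=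
  Module.finrank K (MvPowerSeries (Fin n) K ⧸ Ideal.span (Set.range fun i => pd i f))

namespace Q10
variable {K : Type} [Field K]

/-! ### Exponents -/

noncomputable def E (t : ℕ × ℕ × ℕ) : Fin 3 →₀ ℕ :=
  Finsupp.single 0 t.1 + Finsupp.single 1 t.2.1 + Finsupp.single 2 t.2.2

@[simp] lemma E_apply0 (t : ℕ×ℕ×ℕ) : E t 0 = t.1 := by
  simp [E, Finsupp.single_apply]
@[simp] lemma E_apply1 (t : ℕ×ℕ×ℕ) : E t 1 = t.2.1 := by
  simp [E, Finsupp.single_apply]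
@[simp] lemma E_apply2 (t : ℕ×ℕ×ℕ) : E t 2 = t.2.2 := by
  simp [E, Finsupp.single_apply]

lemma eq_E (d : Fin 3 →₀ ℕ) : d = E (d 0, d 1, d 2) := by
  ext i; fin_cases i <;> simp

lemma E_eq_iff {s t : ℕ×ℕ×ℕ} : E s = E t ↔ s = t := by
  constructor
  · intro h
    have h0 := DFunLike.congr_fun h 0
    have h1 := DFunLike.congr_fun h 1
    have h2 := DFunLike.congr_fun h 2
    simp at h0 h1 h2
    exact Prod.ext h0 (Prod.ext h1 h2)
  · rintro rfl; rfl

lemma E_le_iff {t : ℕ×ℕ×ℕ} {d : Fin 3 →₀ ℕ} :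
    E t ≤ d ↔ t.1 ≤ d 0 ∧ t.2.1 ≤ d 1 ∧ t.2.2 ≤ d 2 := by
  rw [Finsupp.le_def]
  constructor
  · intro h; exact ⟨by simpa using h 0, by simpa using h 1, by simpa using h 2⟩
  · rintro ⟨h0, h1, h2⟩ i; fin_cases i <;> simpa

lemma E_le_E_iff {s t : ℕ×ℕ×ℕ} :
    E t ≤ E s ↔ t.1 ≤ s.1 ∧ t.2.1 ≤ s.2.1 ∧ t.2.2 ≤ s.2.2 := by
  rw [E_le_iff]; simp

lemma E_add (s t : ℕ×ℕ×ℕ) : E (s + t) = E s + E t := by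
  ext i; fin_cases i <;> simp

lemma E_sub (s t : ℕ×ℕ×ℕ) : E s - E t = E (s - t) := by
  ext i; fin_cases i <;> simp [Finsupp.tsub_apply]

lemma single_eq_E0 (n : ℕ) : Finsupp.single (0 : Fin 3) n = E (n,0,0) := by
  ext i; fin_cases i <;> simp [Finsupp.single_apply]
lemma single_eq_E1 (n : ℕ) : Finsupp.single (1 : Fin 3) n = E (0,n,0) := by
  ext i; fin_cases i <;> simp [Finsupp.single_apply]
lemma single_eq_E2 (n : ℕ) : Finsupp.single (2 : Fin 3) n = E (0,0,n) := by
  ext i; fin_cases i <;> simp [Finsupp.single_apply]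

/-! ### Monomials -/

noncomputable def M (t : ℕ×ℕ×ℕ) (c : K) : MvPowerSeries (Fin 3) K := monomial (R := K) (E t) c

noncomputable def N (t : ℕ×ℕ×ℕ) : MvPowerSeries (Fin 3) K := monomial (R := K) (E t) 1

lemma M_eq (t : ℕ×ℕ×ℕ) (c : K) : M t c = c • N t := by
  rw [M, N, ← map_smul, smul_eq_mul, mul_one]

lemma M_zero (t : ℕ×ℕ×ℕ) : M t (0:K) = 0 := map_zero _

lemma N_mul (s t : ℕ×ℕ×ℕ) : (N s : MvPowerSeries (Fin 3) K) * N t = N (s+t) := by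
  rw [N, N, N, monomial_mul_monomial, ← E_add, one_mul]

@[simp] lemma coeff_N (s t : ℕ×ℕ×ℕ) :
    coeff (R := K) (E s) (N t : MvPowerSeries (Fin 3) K) = if s = t then 1 else 0 := by
  classical
  rw [N, coeff_monomial]
  simp [E_eq_iff]

lemma coeff_rN (r : MvPowerSeries (Fin 3) K) (s t : ℕ×ℕ×ℕ) :
    coeff (R := K) (E s) (r * N t)
      = if t.1 ≤ s.1 ∧ t.2.1 ≤ s.2.1 ∧ t.2.2 ≤ s.2.2 then coeff (R := K) (E (s - t)) r else 0 := by
  rw [N, coeff_mul_monomial, E_sub, mul_one]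
  congr 1
  simp [E_le_E_iff]

/-! ### The partial derivatives of f -/

lemma coeff_pd (i : Fin 3) (g : MvPowerSeries (Fin 3) K) (m : Fin 3 →₀ ℕ) :
    coeff (R := K) m (pd i g) = ((m i + 1 : ℕ) : K) * coeff (R := K) (m + Finsupp.single i 1) g := rfl

lemma pd_add (i : Fin 3) (f g : MvPowerSeries (Fin 3) K) :
    pd i (f + g) = pd i f + pd i g := by
  ext m
  simp only [coeff_pd, map_add, mul_add]

lemma pd_monomial (i : Fin 3) (d : Fin 3 →₀ ℕ) (c : K) :
    pd i (monomial (R := K) d c) = monomial (R := K) (d - Finsupp.single i 1) ((d i : K) * c) := by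
  ext m
  classical
  rw [coeff_pd, coeff_monomial, coeff_monomial]
  by_cases h : m + Finsupp.single i 1 = d
  · have hm : m = d - Finsupp.single i 1 := eq_tsub_of_add_eq h
    have hdi : d i = m i + 1 := by
      rw [← h]; simp
    rw [if_pos h, if_pos hm, hdi]
  · rw [if_neg h]
    by_cases hm : m = d - Finsupp.single i 1
    · have hdi : d i = 0 := by
        by_contra hdi
        apply h
        rw [hm, tsub_add_cancel_of_le]
        rw [Finsupp.single_le_iff]
        omega
      rw [if_pos hm, hdi]
      simp
    · rw [if_neg hm, mul_zero]

lemma pd_M (i : Fin 3) (t : ℕ×ℕ×ℕ) (c : K) :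
    pd i (M t c) = monomial (R := K) (E t - Finsupp.single i 1) ((E t i : K) * c) :=
  pd_monomial i (E t) c

lemma pd_M0 (t : ℕ×ℕ×ℕ) (c : K) :
    pd 0 (M t c) = M (t - (1,0,0)) ((t.1 : K) * c) := by
  rw [pd_M, single_eq_E0, E_sub, E_apply0, M]

lemma pd_M1 (t : ℕ×ℕ×ℕ) (c : K) :
    pd 1 (M t c) = M (t - (0,1,0)) ((t.2.1 : K) * c) := by
  rw [pd_M, single_eq_E1, E_sub, E_apply1, M]

lemma pd_M2 (t : ℕ×ℕ×ℕ) (c : K) :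
    pd 2 (M t c) = M (t - (0,0,1)) ((t.2.2 : K) * c) := by
  rw [pd_M, single_eq_E2, E_sub, E_apply2, M]

noncomputable def F (a : K) : MvPowerSeries (Fin 3) K :=
  M (3,0,0) 1 + M (0,4,0) 1 + M (0,1,2) 1 + M (1,3,0) a

lemma F_eq (a : K) :
    X (0 : Fin 3) ^ 3 + X 1 ^ 4 + X 1 * X 2 ^ 2 + C (σ := Fin 3) (R := K) a * X 0 * X 1 ^ 3 = F a := by
  have hX0 : (X (0:Fin 3) : MvPowerSeries (Fin 3) K) ^ 3 = M (3,0,0) 1 := by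
    rw [X_pow_eq, single_eq_E0, M]
  have hX1 : (X (1:Fin 3) : MvPowerSeries (Fin 3) K) ^ 4 = M (0,4,0) 1 := by
    rw [X_pow_eq, single_eq_E1, M]
  have hX12 : (X (1:Fin 3) : MvPowerSeries (Fin 3) K) * X 2 ^ 2 = M (0,1,2) 1 := by
    rw [show (X (1:Fin 3) : MvPowerSeries (Fin 3) K) = monomial (R := K) (Finsupp.single 1 1) 1 from rfl,
      X_pow_eq, monomial_mul_monomial, single_eq_E1, single_eq_E2, ← E_add, M]
    norm_num
  have hlast : C (σ := Fin 3) (R := K) a * X 0 * X 1 ^ 3 = M (1,3,0) a := by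
    rw [show (C (σ := Fin 3) (R := K) a : MvPowerSeries (Fin 3) K) = monomial (R := K) 0 a from rfl,
      show (X (0:Fin 3) : MvPowerSeries (Fin 3) K) = monomial (R := K) (Finsupp.single 0 1) 1 from rfl,
      X_pow_eq, monomial_mul_monomial, monomial_mul_monomial, single_eq_E0, single_eq_E1]
    rw [zero_add, ← E_add, M]
    norm_num
  rw [hX0, hX1, hX12, hlast, F]

noncomputable def G1 (a : K) : MvPowerSeries (Fin 3) K := (3:K)•N (2,0,0) + a•N (0,3,0)
noncomputable def G2 (a : K) : MvPowerSeries (Fin 3) K :=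
  (4:K)•N (0,3,0) + (3*a)•N (1,2,0) + N (0,0,2)
noncomputable def G3 : MvPowerSeries (Fin 3) K := (2:K)•N (0,1,1)

lemma pdF0 (a : K) : pd 0 (F a) = G1 a := by
  rw [F, pd_add, pd_add, pd_add, pd_M0, pd_M0, pd_M0, pd_M0, G1]
  norm_num [M_zero, M_eq]
  rfl

lemma pdF1 (a : K) : pd 1 (F a) = G2 a := by
  rw [F, pd_add, pd_add, pd_add, pd_M1, pd_M1, pd_M1, pd_M1, G2]
  norm_num [M_zero, M_eq]
  ring

lemma pdF2 (a : K) : pd 2 (F a) = G3 := by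
  rw [F, pd_add, pd_add, pd_add, pd_M2, pd_M2, pd_M2, pd_M2, G3]
  norm_num [M_zero, M_eq]

/-! ### The Jacobian ideal -/

noncomputable def Jd (a : K) : Ideal (MvPowerSeries (Fin 3) K) := Ideal.span {G1 a, G2 a, G3}

lemma hG1 (a : K) : G1 a ∈ Jd a := Ideal.subset_span (by simp)
lemma hG2 (a : K) : G2 a ∈ Jd a := Ideal.subset_span (by simp)
lemma hG3 (a : K) : G3 ∈ Jd a := Ideal.subset_span (by simp)

lemma smul_mem_I {Iid : Ideal (MvPowerSeries (Fin 3) K)} {w} (c : K) (h : w ∈ Iid) :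
    c • w ∈ Iid := by
  rw [Algebra.smul_def]; exact Ideal.mul_mem_left _ _ h

lemma scale_mem {Iid : Ideal (MvPowerSeries (Fin 3) K)} {w} {c : K} (h : c • w ∈ Iid)
    (hc : c ≠ 0) : w ∈ Iid := by
  have : w = c⁻¹ • (c • w) := by rw [smul_smul, inv_mul_cancel₀ hc, one_smul]
  rw [this]; exact smul_mem_I _ h

lemma mul_N_mem {Iid : Ideal (MvPowerSeries (Fin 3) K)} {s : ℕ×ℕ×ℕ}
    (h : (N s : MvPowerSeries (Fin 3) K) ∈ Iid)
    (t : ℕ×ℕ×ℕ) {u : ℕ×ℕ×ℕ} (hu : t + s = u) : (N u : MvPowerSeries (Fin 3) K) ∈ Iid := by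
  subst hu; rw [← N_mul]; exact Ideal.mul_mem_left _ _ h

section mem
variable (a : K)

lemma m_yz (h2 : (2:K) ≠ 0) : (N (0,1,1) : MvPowerSeries (Fin 3) K) ∈ Jd a := by
  refine scale_mem (c := (2:K)) ?_ h2
  exact hG3 a

lemma m_z3 (h2 : (2:K) ≠ 0) : (N (0,0,3) : MvPowerSeries (Fin 3) K) ∈ Jd a := by
  have key : (N (0,0,3) : MvPowerSeries (Fin 3) K)
      = N (0,0,1) * G2 a + (-4 : K)•N (0,3,1) + (-(3*a))•N (1,2,1) := by
    simp only [G2, mul_add, mul_smul_comm, N_mul, Prod.mk_add_mk]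
    norm_num
    try (match_scalars <;> ring)
  rw [key]
  refine Ideal.add_mem _ (Ideal.add_mem _ (Ideal.mul_mem_left _ _ (hG2 a)) ?_) ?_
  · exact smul_mem_I _ (mul_N_mem (m_yz a h2) (0,2,0) rfl)
  · exact smul_mem_I _ (mul_N_mem (m_yz a h2) (1,1,0) rfl)

noncomputable def vC (a : K) : MvPowerSeries (Fin 3) K := (8:K)•N (0,4,0) + (6*a)•N (1,3,0)

lemma m_vC : vC a ∈ Jd a := by
  have key : vC a = (2:K) • (N (0,1,0) * G2 a) + (-1:K) • (N (0,0,1) * G3) := by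
    simp only [vC, G2, G3, mul_add, mul_smul_comm, N_mul, Prod.mk_add_mk]
    norm_num
    try (match_scalars <;> ring)
  rw [key]
  exact Ideal.add_mem _ (smul_mem_I _ (Ideal.mul_mem_left _ _ (hG2 a)))
    (smul_mem_I _ (Ideal.mul_mem_left _ _ (hG3 a)))

lemma m_y5 (h2 : (2:K) ≠ 0) : (N (0,5,0) : MvPowerSeries (Fin 3) K) ∈ Jd a := by
  have hW : ((32:K)•N (0,5,0) + (6*a^3)•N (0,6,0) : MvPowerSeries (Fin 3) K) ∈ Jd a := by
    have key : ((32:K)•N (0,5,0) + (6*a^3)•N (0,6,0) : MvPowerSeries (Fin 3) K)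
        = (4:K) • (N (0,1,0) * vC a) + (-(3*a)) • (N (1,0,0) * vC a)
          + (6*a^2) • (N (0,3,0) * G1 a) := by
      simp only [vC, G1, mul_add, mul_smul_comm, N_mul, Prod.mk_add_mk]
      norm_num
      try (match_scalars <;> ring)
    rw [key]
    refine Ideal.add_mem _ (Ideal.add_mem _ ?_ ?_) ?_ <;>
      exact smul_mem_I _ (Ideal.mul_mem_left _ _ (by first | exact m_vC a | exact hG1 a))
  set u : MvPowerSeries (Fin 3) K := (32:K)•(1:MvPowerSeries (Fin 3) K) + (6*a^3)•N (0,1,0)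
    with hu
  have h32 : (32:K) ≠ 0 := by
    have := mul_ne_zero (mul_ne_zero (mul_ne_zero (mul_ne_zero h2 h2) h2) h2) h2
    norm_num at this; exact this
  have hcc : constantCoeff (σ := Fin 3) (R := K) u = ((Units.mk0 (32:K) h32 : Kˣ) : K) := by
    rw [← coeff_zero_eq_constantCoeff_apply, hu]
    rw [map_add, map_smul, map_smul]
    have hne : (0 : Fin 3 →₀ ℕ) ≠ E (0,1,0) := by
      intro h
      have := DFunLike.congr_fun h 1
      simp [E, Finsupp.single_apply] at this
    classical
    rw [N, coeff_monomial, if_neg hne]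
    simp
  have hkey : (N (0,5,0) : MvPowerSeries (Fin 3) K)
      = invOfUnit u (Units.mk0 (32:K) h32) * (u * N (0,5,0)) := by
    rw [← mul_assoc, mul_comm _ u, mul_invOfUnit u _ hcc, one_mul]
  have huN : u * (N (0,5,0) : MvPowerSeries (Fin 3) K)
      = (32:K)•N (0,5,0) + (6*a^3)•N (0,6,0) := by
    rw [hu]
    simp only [add_mul, smul_mul_assoc, one_mul, N_mul, Prod.mk_add_mk]
  rw [hkey, huN]
  exact Ideal.mul_mem_left _ _ hW

lemma m_y6 (h2 : (2:K) ≠ 0) : (N (0,6,0) : MvPowerSeries (Fin 3) K) ∈ Jd a :=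
  mul_N_mem (m_y5 a h2) (0,1,0) rfl

lemma m_x2y3 (h2 : (2:K) ≠ 0) (h3 : (3:K) ≠ 0) :
    (N (2,3,0) : MvPowerSeries (Fin 3) K) ∈ Jd a := by
  refine scale_mem (c := (3:K)) ?_ h3
  have key : (3:K)•(N (2,3,0) : MvPowerSeries (Fin 3) K)
      = N (0,3,0) * G1 a + (-a)•N (0,6,0) := by
    simp only [G1, mul_add, mul_smul_comm, N_mul, Prod.mk_add_mk]
    norm_num
    try (match_scalars <;> ring)
  rw [key]
  exact Ideal.add_mem _ (Ideal.mul_mem_left _ _ (hG1 a)) (smul_mem_I _ (m_y6 a h2))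

lemma m_xy4 (h2 : (2:K) ≠ 0) (h3 : (3:K) ≠ 0) :
    (N (1,4,0) : MvPowerSeries (Fin 3) K) ∈ Jd a := by
  have h8 : (8:K) ≠ 0 := by
    have := mul_ne_zero (mul_ne_zero h2 h2) h2; norm_num at this; exact this
  refine scale_mem (c := (8:K)) ?_ h8
  have key : (8:K)•(N (1,4,0) : MvPowerSeries (Fin 3) K)
      = N (1,0,0) * vC a + (-(6*a))•N (2,3,0) := by
    simp only [vC, mul_add, mul_smul_comm, N_mul, Prod.mk_add_mk]
    norm_num
    try (match_scalars <;> ring)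
  rw [key]
  exact Ideal.add_mem _ (Ideal.mul_mem_left _ _ (m_vC a)) (smul_mem_I _ (m_x2y3 a h2 h3))

lemma m_x2y2 (h2 : (2:K) ≠ 0) (h3 : (3:K) ≠ 0) :
    (N (2,2,0) : MvPowerSeries (Fin 3) K) ∈ Jd a := by
  refine scale_mem (c := (3:K)) ?_ h3
  have key : (3:K)•(N (2,2,0) : MvPowerSeries (Fin 3) K)
      = N (0,2,0) * G1 a + (-a)•N (0,5,0) := by
    simp only [G1, mul_add, mul_smul_comm, N_mul, Prod.mk_add_mk]
    norm_num
    try (match_scalars <;> ring)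
  rw [key]
  exact Ideal.add_mem _ (Ideal.mul_mem_left _ _ (hG1 a)) (smul_mem_I _ (m_y5 a h2))

lemma m_x3y (h2 : (2:K) ≠ 0) (h3 : (3:K) ≠ 0) :
    (N (3,1,0) : MvPowerSeries (Fin 3) K) ∈ Jd a := by
  refine scale_mem (c := (3:K)) ?_ h3
  have key : (3:K)•(N (3,1,0) : MvPowerSeries (Fin 3) K)
      = N (1,1,0) * G1 a + (-a)•N (1,4,0) := by
    simp only [G1, mul_add, mul_smul_comm, N_mul, Prod.mk_add_mk]
    norm_num
    try (match_scalars <;> ring)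
  rw [key]
  exact Ideal.add_mem _ (Ideal.mul_mem_left _ _ (hG1 a)) (smul_mem_I _ (m_xy4 a h2 h3))

lemma m_x4 (h2 : (2:K) ≠ 0) (h3 : (3:K) ≠ 0) :
    (N (4,0,0) : MvPowerSeries (Fin 3) K) ∈ Jd a := by
  refine scale_mem (c := (3:K)) ?_ h3
  have key : (3:K)•(N (4,0,0) : MvPowerSeries (Fin 3) K)
      = N (2,0,0) * G1 a + (-a)•N (2,3,0) := by
    simp only [G1, mul_add, mul_smul_comm, N_mul, Prod.mk_add_mk]
    norm_num
    try (match_scalars <;> ring)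
  rw [key]
  exact Ideal.add_mem _ (Ideal.mul_mem_left _ _ (hG1 a)) (smul_mem_I _ (m_x2y3 a h2 h3))

lemma m_x5 (h2 : (2:K) ≠ 0) (h3 : (3:K) ≠ 0) :
    (N (5,0,0) : MvPowerSeries (Fin 3) K) ∈ Jd a := by
  refine scale_mem (c := (3:K)) ?_ h3
  have key : (3:K)•(N (5,0,0) : MvPowerSeries (Fin 3) K)
      = N (3,0,0) * G1 a + (-a)•N (3,3,0) := by
    simp only [G1, mul_add, mul_smul_comm, N_mul, Prod.mk_add_mk]
    norm_num
    try (match_scalars <;> ring)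
  rw [key]
  exact Ideal.add_mem _ (Ideal.mul_mem_left _ _ (hG1 a))
    (smul_mem_I _ (mul_N_mem (m_x2y3 a h2 h3) (1,0,0) rfl))

lemma m_x4y (h2 : (2:K) ≠ 0) (h3 : (3:K) ≠ 0) :
    (N (4,1,0) : MvPowerSeries (Fin 3) K) ∈ Jd a := by
  refine scale_mem (c := (3:K)) ?_ h3
  have key : (3:K)•(N (4,1,0) : MvPowerSeries (Fin 3) K)
      = N (2,1,0) * G1 a + (-a)•N (2,4,0) := by
    simp only [G1, mul_add, mul_smul_comm, N_mul, Prod.mk_add_mk]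
    norm_num
    try (match_scalars <;> ring)
  rw [key]
  exact Ideal.add_mem _ (Ideal.mul_mem_left _ _ (hG1 a))
    (smul_mem_I _ (mul_N_mem (m_x2y3 a h2 h3) (0,1,0) rfl))

lemma m_x2z (h2 : (2:K) ≠ 0) (h3 : (3:K) ≠ 0) :
    (N (2,0,1) : MvPowerSeries (Fin 3) K) ∈ Jd a := by
  refine scale_mem (c := (3:K)) ?_ h3
  have key : (3:K)•(N (2,0,1) : MvPowerSeries (Fin 3) K)
      = N (0,0,1) * G1 a + (-a)•N (0,3,1) := by
    simp only [G1, mul_add, mul_smul_comm, N_mul, Prod.mk_add_mk]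
    norm_num
    try (match_scalars <;> ring)
  rw [key]
  exact Ideal.add_mem _ (Ideal.mul_mem_left _ _ (hG1 a))
    (smul_mem_I _ (mul_N_mem (m_yz a h2) (0,2,0) rfl))

lemma m_x3z (h2 : (2:K) ≠ 0) (h3 : (3:K) ≠ 0) :
    (N (3,0,1) : MvPowerSeries (Fin 3) K) ∈ Jd a := by
  refine scale_mem (c := (3:K)) ?_ h3
  have key : (3:K)•(N (3,0,1) : MvPowerSeries (Fin 3) K)
      = N (1,0,1) * G1 a + (-a)•N (1,3,1) := by
    simp only [G1, mul_add, mul_smul_comm, N_mul, Prod.mk_add_mk]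
    norm_num
    try (match_scalars <;> ring)
  rw [key]
  exact Ideal.add_mem _ (Ideal.mul_mem_left _ _ (hG1 a))
    (smul_mem_I _ (mul_N_mem (m_yz a h2) (1,2,0) rfl))

lemma m_x2z2 (h2 : (2:K) ≠ 0) (h3 : (3:K) ≠ 0) :
    (N (2,0,2) : MvPowerSeries (Fin 3) K) ∈ Jd a := by
  have key : (N (2,0,2) : MvPowerSeries (Fin 3) K)
      = N (2,0,0) * G2 a + (-4:K)•N (2,3,0) + (-(3*a))•N (3,2,0) := by
    simp only [G2, mul_add, mul_smul_comm, N_mul, Prod.mk_add_mk]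
    norm_num
    try (match_scalars <;> ring)
  rw [key]
  refine Ideal.add_mem _ (Ideal.add_mem _ (Ideal.mul_mem_left _ _ (hG2 a))
    (smul_mem_I _ (m_x2y3 a h2 h3))) (smul_mem_I _ (mul_N_mem (m_x2y2 a h2 h3) (1,0,0) rfl))

lemma w_xz2 (h2 : (2:K) ≠ 0) (h3 : (3:K) ≠ 0) :
    (N (1,0,2) + (4:K)•N (1,3,0) : MvPowerSeries (Fin 3) K) ∈ Jd a := by
  have key : (N (1,0,2) + (4:K)•N (1,3,0) : MvPowerSeries (Fin 3) K)
      = N (1,0,0) * G2 a + (-(3*a))•N (2,2,0) := by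
    simp only [G2, mul_add, mul_smul_comm, N_mul, Prod.mk_add_mk]
    norm_num
    try (match_scalars <;> ring)
  rw [key]
  exact Ideal.add_mem _ (Ideal.mul_mem_left _ _ (hG2 a)) (smul_mem_I _ (m_x2y2 a h2 h3))

lemma w_x2 (h3 : (3:K) ≠ 0) :
    (N (2,0,0) + (a*3⁻¹)•N (0,3,0) : MvPowerSeries (Fin 3) K) ∈ Jd a := by
  have key : (N (2,0,0) + (a*3⁻¹)•N (0,3,0) : MvPowerSeries (Fin 3) K) = (3⁻¹:K) • G1 a := by
    simp only [G1]
    match_scalars <;> field_simp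
  rw [key]; exact smul_mem_I _ (hG1 a)

lemma w_x3 (h3 : (3:K) ≠ 0) :
    (N (3,0,0) + (a*3⁻¹)•N (1,3,0) : MvPowerSeries (Fin 3) K) ∈ Jd a := by
  have key : (N (3,0,0) + (a*3⁻¹)•N (1,3,0) : MvPowerSeries (Fin 3) K)
      = (3⁻¹:K) • (N (1,0,0) * G1 a) := by
    simp only [G1, mul_add, mul_smul_comm, N_mul, Prod.mk_add_mk]
    norm_num
    try (match_scalars <;> field_simp)
  rw [key]; exact smul_mem_I _ (Ideal.mul_mem_left _ _ (hG1 a))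

lemma w_y4 (h2 : (2:K) ≠ 0) :
    (N (0,4,0) + (3*a*4⁻¹)•N (1,3,0) : MvPowerSeries (Fin 3) K) ∈ Jd a := by
  have h8 : (8:K) ≠ 0 := by
    have := mul_ne_zero (mul_ne_zero h2 h2) h2; norm_num at this; exact this
  have h4 : (4:K) ≠ 0 := by
    have := mul_ne_zero h2 h2; norm_num at this; exact this
  have key : (N (0,4,0) + (3*a*4⁻¹)•N (1,3,0) : MvPowerSeries (Fin 3) K) = (8⁻¹:K) • vC a := by
    simp only [vC]
    match_scalars <;> field_simp <;> ring
  rw [key]; exact smul_mem_I _ (m_vC a)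

lemma w_x2y (h2 : (2:K) ≠ 0) (h3 : (3:K) ≠ 0) :
    (N (2,1,0) - (a^2*4⁻¹)•N (1,3,0) : MvPowerSeries (Fin 3) K) ∈ Jd a := by
  have h4 : (4:K) ≠ 0 := by
    have := mul_ne_zero h2 h2; norm_num at this; exact this
  have h24 : (24:K) ≠ 0 := by
    have := mul_ne_zero (mul_ne_zero (mul_ne_zero h2 h2) h2) h3; norm_num at this; exact this
  have key : (N (2,1,0) - (a^2*4⁻¹)•N (1,3,0) : MvPowerSeries (Fin 3) K)
      = (24⁻¹:K) • ((8:K) • (N (0,1,0) * G1 a) + (-a) • vC a) := by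
    simp only [G1, vC, mul_add, mul_smul_comm, N_mul, Prod.mk_add_mk]
    norm_num
    try (match_scalars <;> field_simp <;> ring)
  rw [key]
  exact smul_mem_I _ (Ideal.add_mem _ (smul_mem_I _ (Ideal.mul_mem_left _ _ (hG1 a)))
    (smul_mem_I _ (m_vC a)))

end mem
/-! ### Lists of exponents -/

def L35 : List (ℕ×ℕ×ℕ) :=
  [(0,0,0),
   (1,0,0),(0,1,0),(0,0,1),
   (2,0,0),(1,1,0),(1,0,1),(0,2,0),(0,1,1),(0,0,2),
   (3,0,0),(2,1,0),(2,0,1),(1,2,0),(1,1,1),(1,0,2),(0,3,0),(0,2,1),(0,1,2),(0,0,3),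
   (4,0,0),(3,1,0),(3,0,1),(2,2,0),(2,1,1),(2,0,2),(1,3,0),(1,2,1),(1,1,2),(1,0,3),
   (0,4,0),(0,3,1),(0,2,2),(0,1,3),(0,0,4)]

def L5 : List (ℕ×ℕ×ℕ) :=
  [(5,0,0),(4,1,0),(4,0,1),(3,2,0),(3,1,1),(3,0,2),(2,3,0),(2,2,1),(2,1,2),(2,0,3),
   (1,4,0),(1,3,1),(1,2,2),(1,1,3),(1,0,4),(0,5,0),(0,4,1),(0,3,2),(0,2,3),(0,1,4),(0,0,5)]

def B10 : List (ℕ×ℕ×ℕ) :=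
  [(0,0,0),(1,0,0),(0,1,0),(0,0,1),(1,1,0),(0,2,0),(1,0,1),(0,3,0),(1,2,0),(1,3,0)]

lemma nodup35 : L35.Nodup := by decide

lemma mem_L35 (i j k : ℕ) (h : i + j + k ≤ 4) : (i,j,k) ∈ L35 := by
  have hi : i ≤ 4 := by omega
  have hj : j ≤ 4 := by omega
  have hk : k ≤ 4 := by omega
  interval_cases i <;> interval_cases j <;> interval_cases k <;> first | decide | omega

lemma mem_L5 (i j k : ℕ) (h : i + j + k = 5) : (i,j,k) ∈ L5 := by
  have hi : i ≤ 5 := by omega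
  have hj : j ≤ 5 := by omega
  have hk : k ≤ 5 := by omega
  interval_cases i <;> interval_cases j <;> interval_cases k <;> first | decide | omega

lemma sum5_L5 : ∀ t ∈ L5, t.1 + t.2.1 + t.2.2 = 5 := by decide

lemma m_deg5 (a : K) (h2 : (2:K) ≠ 0) (h3 : (3:K) ≠ 0) :
    ∀ t ∈ L5, (N t : MvPowerSeries (Fin 3) K) ∈ Jd a := by
  intro t ht
  fin_cases ht
  · exact m_x5 a h2 h3
  · exact m_x4y a h2 h3
  · exact mul_N_mem (m_x2z a h2 h3) (2,0,0) rfl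
  · exact mul_N_mem (m_x2y2 a h2 h3) (1,0,0) rfl
  · exact mul_N_mem (m_yz a h2) (3,0,0) rfl
  · exact mul_N_mem (m_x2z2 a h2 h3) (1,0,0) rfl
  · exact m_x2y3 a h2 h3
  · exact mul_N_mem (m_yz a h2) (2,1,0) rfl
  · exact mul_N_mem (m_yz a h2) (2,0,1) rfl
  · exact mul_N_mem (m_z3 a h2) (2,0,0) rfl
  · exact m_xy4 a h2 h3
  · exact mul_N_mem (m_yz a h2) (1,2,0) rfl
  · exact mul_N_mem (m_yz a h2) (1,1,1) rfl
  · exact mul_N_mem (m_yz a h2) (1,0,2) rfl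
  · exact mul_N_mem (m_z3 a h2) (1,0,1) rfl
  · exact m_y5 a h2
  · exact mul_N_mem (m_yz a h2) (0,3,0) rfl
  · exact mul_N_mem (m_yz a h2) (0,2,1) rfl
  · exact mul_N_mem (m_yz a h2) (0,1,2) rfl
  · exact mul_N_mem (m_z3 a h2) (0,1,1) rfl
  · exact mul_N_mem (m_z3 a h2) (0,0,2) rfl

/-! ### Everything of order ≥ 5 lies in the ideal -/

def sg (d : Fin 3 →₀ ℕ) : ℕ×ℕ×ℕ :=
  (min (d 0) 5, min (d 1) (5 - min (d 0) 5),
    5 - min (d 0) 5 - min (d 1) (5 - min (d 0) 5))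

lemma sg_sum (d : Fin 3 →₀ ℕ) (hd : 5 ≤ d 0 + d 1 + d 2) :
    (sg d).1 + (sg d).2.1 + (sg d).2.2 = 5 := by
  unfold sg; simp only; omega

lemma sg_le (d : Fin 3 →₀ ℕ) (hd : 5 ≤ d 0 + d 1 + d 2) : E (sg d) ≤ d := by
  rw [E_le_iff]
  unfold sg; simp only
  omega

lemma mem_order5 (a : K) (h2 : (2:K) ≠ 0) (h3 : (3:K) ≠ 0)
    (f' : MvPowerSeries (Fin 3) K)
    (hf : ∀ d : Fin 3 →₀ ℕ, d 0 + d 1 + d 2 < 5 → coeff (R := K) d f' = 0) : f' ∈ Jd a := by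
  classical
  set g : (ℕ×ℕ×ℕ) → MvPowerSeries (Fin 3) K :=
    fun t => fun m => if sg (E t + m) = t then coeff (R := K) (E t + m) f' else 0 with hg
  have hgapp : ∀ t m, coeff (R := K) m (g t)
      = if sg (E t + m) = t then coeff (R := K) (E t + m) f' else 0 := fun t m => rfl
  have hdc : f' = ∑ t ∈ L5.toFinset, N t * g t := by
    ext d
    rw [map_sum]
    by_cases hd : d 0 + d 1 + d 2 < 5
    · rw [hf d hd]
      symm
      apply Finset.sum_eq_zero
      intro t ht
      rw [N, coeff_monomial_mul, if_neg]
      intro hle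
      rw [E_le_iff] at hle
      have h5 := sum5_L5 t (List.mem_toFinset.mp ht)
      omega
    · push_neg at hd
      have ht0 : sg d ∈ L5.toFinset := by
        rw [List.mem_toFinset]
        have := sg_sum d hd
        rcases hsg : sg d with ⟨i, j, k⟩
        rw [hsg] at this
        exact mem_L5 i j k this
      have hsgle : E (sg d) ≤ d := sg_le d hd
      have hterm : ∀ t ∈ L5.toFinset,
          coeff (R := K) d (N t * g t) = if t = sg d then coeff (R := K) d f' else 0 := by
        intro t ht
        rw [N, coeff_monomial_mul]
        by_cases hteq : t = sg d
        · subst hteq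
          rw [if_pos hsgle, one_mul, if_pos rfl, hgapp,
            add_tsub_cancel_of_le hsgle, if_pos rfl]
        · rw [if_neg hteq]
          by_cases hle : E t ≤ d
          · rw [if_pos hle, one_mul, hgapp, add_tsub_cancel_of_le hle,
              if_neg (fun h => hteq h.symm)]
          · rw [if_neg hle]
      rw [Finset.sum_congr rfl hterm, Finset.sum_ite_eq' _ _ _, if_pos ht0]
  rw [hdc]
  exact Ideal.sum_mem _ fun t ht =>
    Ideal.mul_mem_right _ _ (m_deg5 a h2 h3 t (List.mem_toFinset.mp ht))

/-! ### Normal forms -/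

noncomputable def NFf (a : K) : ℕ×ℕ×ℕ → MvPowerSeries (Fin 3) K := fun t =>
  if t = (2,0,0) then -((a*3⁻¹)•N (0,3,0))
  else if t = (0,0,2) then -((4:K)•N (0,3,0)) - (3*a)•N (1,2,0)
  else if t = (3,0,0) then -((a*3⁻¹)•N (1,3,0))
  else if t = (2,1,0) then (a^2*4⁻¹)•N (1,3,0)
  else if t = (1,0,2) then -((4:K)•N (1,3,0))
  else if t = (0,4,0) then -((3*a*4⁻¹)•N (1,3,0))
  else if t ∈ B10 then N t
  else 0

lemma sub_NF_mem (a : K) (h2 : (2:K) ≠ 0) (h3 : (3:K) ≠ 0) :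
    ∀ t ∈ L35, (N t - NFf a t : MvPowerSeries (Fin 3) K) ∈ Jd a := by
  intro t ht
  fin_cases ht
  -- (0,0,0)
  · simp [NFf, B10, Prod.ext_iff]
  -- (1,0,0), (0,1,0), (0,0,1)
  · simp [NFf, B10, Prod.ext_iff]
  · simp [NFf, B10, Prod.ext_iff]
  · simp [NFf, B10, Prod.ext_iff]
  -- (2,0,0)
  · rw [show (N (2,0,0) - NFf a (2,0,0) : MvPowerSeries (Fin 3) K)
        = N (2,0,0) + (a*3⁻¹)•N (0,3,0) by simp [NFf, Prod.ext_iff]; try module]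
    exact w_x2 a h3
  -- (1,1,0),(1,0,1),(0,2,0)
  · simp [NFf, B10, Prod.ext_iff]
  · simp [NFf, B10, Prod.ext_iff]
  · simp [NFf, B10, Prod.ext_iff]
  -- (0,1,1)
  · simpa [NFf, B10, Prod.ext_iff] using m_yz a h2
  -- (0,0,2)
  · rw [show (N (0,0,2) - NFf a (0,0,2) : MvPowerSeries (Fin 3) K)
        = (4:K)•N (0,3,0) + (3*a)•N (1,2,0) + N (0,0,2) by simp [NFf, Prod.ext_iff]; try module]
    exact hG2 a
  -- (3,0,0)
  · rw [show (N (3,0,0) - NFf a (3,0,0) : MvPowerSeries (Fin 3) K)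
        = N (3,0,0) + (a*3⁻¹)•N (1,3,0) by simp [NFf, Prod.ext_iff]; try module]
    exact w_x3 a h3
  -- (2,1,0)
  · rw [show (N (2,1,0) - NFf a (2,1,0) : MvPowerSeries (Fin 3) K)
        = N (2,1,0) - (a^2*4⁻¹)•N (1,3,0) by simp [NFf, Prod.ext_iff]]
    exact w_x2y a h2 h3
  -- (2,0,1)
  · simpa [NFf, B10, Prod.ext_iff] using m_x2z a h2 h3
  -- (1,2,0)
  · simp [NFf, B10, Prod.ext_iff]
  -- (1,1,1)
  · simpa [NFf, B10, Prod.ext_iff] using mul_N_mem (m_yz a h2) (1,0,0) rfl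
  -- (1,0,2)
  · rw [show (N (1,0,2) - NFf a (1,0,2) : MvPowerSeries (Fin 3) K)
        = N (1,0,2) + (4:K)•N (1,3,0) by simp [NFf, Prod.ext_iff]; try module]
    exact w_xz2 a h2 h3
  -- (0,3,0)
  · simp [NFf, B10, Prod.ext_iff]
  -- (0,2,1)
  · simpa [NFf, B10, Prod.ext_iff] using mul_N_mem (m_yz a h2) (0,1,0) rfl
  -- (0,1,2)
  · simpa [NFf, B10, Prod.ext_iff] using mul_N_mem (m_yz a h2) (0,0,1) rfl
  -- (0,0,3)
  · simpa [NFf, B10, Prod.ext_iff] using m_z3 a h2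
  -- (4,0,0)
  · simpa [NFf, B10, Prod.ext_iff] using m_x4 a h2 h3
  -- (3,1,0)
  · simpa [NFf, B10, Prod.ext_iff] using m_x3y a h2 h3
  -- (3,0,1)
  · simpa [NFf, B10, Prod.ext_iff] using m_x3z a h2 h3
  -- (2,2,0)
  · simpa [NFf, B10, Prod.ext_iff] using m_x2y2 a h2 h3
  -- (2,1,1)
  · simpa [NFf, B10, Prod.ext_iff] using mul_N_mem (m_yz a h2) (2,0,0) rfl
  -- (2,0,2)
  · simpa [NFf, B10, Prod.ext_iff] using m_x2z2 a h2 h3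
  -- (1,3,0)
  · simp [NFf, B10, Prod.ext_iff]
  -- (1,2,1)
  · simpa [NFf, B10, Prod.ext_iff] using mul_N_mem (m_yz a h2) (1,1,0) rfl
  -- (1,1,2)
  · simpa [NFf, B10, Prod.ext_iff] using mul_N_mem (m_yz a h2) (1,0,1) rfl
  -- (1,0,3)
  · simpa [NFf, B10, Prod.ext_iff] using mul_N_mem (m_z3 a h2) (1,0,0) rfl
  -- (0,4,0)
  · rw [show (N (0,4,0) - NFf a (0,4,0) : MvPowerSeries (Fin 3) K)
        = N (0,4,0) + (3*a*4⁻¹)•N (1,3,0) by simp [NFf, Prod.ext_iff]; try module]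
    exact w_y4 a h2
  -- (0,3,1)
  · simpa [NFf, B10, Prod.ext_iff] using mul_N_mem (m_yz a h2) (0,2,0) rfl
  -- (0,2,2)
  · simpa [NFf, B10, Prod.ext_iff] using mul_N_mem (m_yz a h2) (0,1,1) rfl
  -- (0,1,3)
  · simpa [NFf, B10, Prod.ext_iff] using mul_N_mem (m_yz a h2) (0,0,2) rfl
  -- (0,0,4)
  · simpa [NFf, B10, Prod.ext_iff] using mul_N_mem (m_z3 a h2) (0,0,1) rfl

/-! ### The linear functional φ -/

noncomputable def phi (a : K) : MvPowerSeries (Fin 3) K →ₗ[K] (Fin 10 → K) :=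
  LinearMap.pi
  ![coeff (R := K) (E (0,0,0)), coeff (R := K) (E (1,0,0)), coeff (R := K) (E (0,1,0)), coeff (R := K) (E (0,0,1)),
    coeff (R := K) (E (1,1,0)), coeff (R := K) (E (0,2,0)), coeff (R := K) (E (1,0,1)),
    coeff (R := K) (E (0,3,0)) - (a*3⁻¹) • coeff (R := K) (E (2,0,0)) - (4:K) • coeff (R := K) (E (0,0,2)),
    coeff (R := K) (E (1,2,0)) - (3*a) • coeff (R := K) (E (0,0,2)),
    coeff (R := K) (E (1,3,0)) - (4:K) • coeff (R := K) (E (1,0,2)) - (a*3⁻¹) • coeff (R := K) (E (3,0,0))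
      + (a^2*4⁻¹) • coeff (R := K) (E (2,1,0)) - (3*a*4⁻¹) • coeff (R := K) (E (0,4,0))]

lemma phi_app0 (a : K) (f : MvPowerSeries (Fin 3) K) :
    phi a f 0 = coeff (R := K) (E (0,0,0)) f := rfl

lemma phi_app1 (a : K) (f : MvPowerSeries (Fin 3) K) :
    phi a f 1 = coeff (R := K) (E (1,0,0)) f := rfl

lemma phi_app2 (a : K) (f : MvPowerSeries (Fin 3) K) :
    phi a f 2 = coeff (R := K) (E (0,1,0)) f := rfl

lemma phi_app3 (a : K) (f : MvPowerSeries (Fin 3) K) :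
    phi a f 3 = coeff (R := K) (E (0,0,1)) f := rfl

lemma phi_app4 (a : K) (f : MvPowerSeries (Fin 3) K) :
    phi a f 4 = coeff (R := K) (E (1,1,0)) f := rfl

lemma phi_app5 (a : K) (f : MvPowerSeries (Fin 3) K) :
    phi a f 5 = coeff (R := K) (E (0,2,0)) f := rfl

lemma phi_app6 (a : K) (f : MvPowerSeries (Fin 3) K) :
    phi a f 6 = coeff (R := K) (E (1,0,1)) f := rfl

lemma phi_app7 (a : K) (f : MvPowerSeries (Fin 3) K) :
    phi a f 7 = coeff (R := K) (E (0,3,0)) f - a*3⁻¹ * coeff (R := K) (E (2,0,0)) f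
      - 4 * coeff (R := K) (E (0,0,2)) f := rfl

lemma phi_app8 (a : K) (f : MvPowerSeries (Fin 3) K) :
    phi a f 8 = coeff (R := K) (E (1,2,0)) f - 3*a * coeff (R := K) (E (0,0,2)) f := rfl

lemma phi_app9 (a : K) (f : MvPowerSeries (Fin 3) K) :
    phi a f 9 = coeff (R := K) (E (1,3,0)) f - 4 * coeff (R := K) (E (1,0,2)) f
      - a*3⁻¹ * coeff (R := K) (E (3,0,0)) f + a^2*4⁻¹ * coeff (R := K) (E (2,1,0)) f
      - 3*a*4⁻¹ * coeff (R := K) (E (0,4,0)) f := rfl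

lemma phi_rG1 (a : K) (h2 : (2:K) ≠ 0) (h3 : (3:K) ≠ 0) (r : MvPowerSeries (Fin 3) K) :
    phi a (r * G1 a) = 0 := by
  have h4 : (4:K) ≠ 0 := by
    have := mul_ne_zero h2 h2; norm_num at this; exact this
  funext i
  fin_cases i
  · show coeff (R := K) (E (0,0,0)) (r * G1 a) = (0:K)
    simp only [G1, G2, G3, mul_add, mul_smul_comm, map_add, map_smul, smul_eq_mul,
      coeff_rN]
    norm_num [Prod.mk_sub_mk]
    try field_simp
    try ring
  · show coeff (R := K) (E (1,0,0)) (r * G1 a) = (0:K)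
    simp only [G1, G2, G3, mul_add, mul_smul_comm, map_add, map_smul, smul_eq_mul,
      coeff_rN]
    norm_num [Prod.mk_sub_mk]
    try field_simp
    try ring
  · show coeff (R := K) (E (0,1,0)) (r * G1 a) = (0:K)
    simp only [G1, G2, G3, mul_add, mul_smul_comm, map_add, map_smul, smul_eq_mul,
      coeff_rN]
    norm_num [Prod.mk_sub_mk]
    try field_simp
    try ring
  · show coeff (R := K) (E (0,0,1)) (r * G1 a) = (0:K)
    simp only [G1, G2, G3, mul_add, mul_smul_comm, map_add, map_smul, smul_eq_mul,
      coeff_rN]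
    norm_num [Prod.mk_sub_mk]
    try field_simp
    try ring
  · show coeff (R := K) (E (1,1,0)) (r * G1 a) = (0:K)
    simp only [G1, G2, G3, mul_add, mul_smul_comm, map_add, map_smul, smul_eq_mul,
      coeff_rN]
    norm_num [Prod.mk_sub_mk]
    try field_simp
    try ring
  · show coeff (R := K) (E (0,2,0)) (r * G1 a) = (0:K)
    simp only [G1, G2, G3, mul_add, mul_smul_comm, map_add, map_smul, smul_eq_mul,
      coeff_rN]
    norm_num [Prod.mk_sub_mk]
    try field_simp
    try ring
  · show coeff (R := K) (E (1,0,1)) (r * G1 a) = (0:K)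
    simp only [G1, G2, G3, mul_add, mul_smul_comm, map_add, map_smul, smul_eq_mul,
      coeff_rN]
    norm_num [Prod.mk_sub_mk]
    try field_simp
    try ring
  · show coeff (R := K) (E (0,3,0)) (r * G1 a) - a*3⁻¹ * coeff (R := K) (E (2,0,0)) (r * G1 a) - 4 * coeff (R := K) (E (0,0,2)) (r * G1 a) = (0:K)
    simp only [G1, G2, G3, mul_add, mul_smul_comm, map_add, map_smul, smul_eq_mul,
      coeff_rN]
    norm_num [Prod.mk_sub_mk]
    try field_simp
    try ring
  · show coeff (R := K) (E (1,2,0)) (r * G1 a) - 3*a * coeff (R := K) (E (0,0,2)) (r * G1 a) = (0:K)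
    simp only [G1, G2, G3, mul_add, mul_smul_comm, map_add, map_smul, smul_eq_mul,
      coeff_rN]
    norm_num [Prod.mk_sub_mk]
    try field_simp
    try ring
  · show coeff (R := K) (E (1,3,0)) (r * G1 a) - 4 * coeff (R := K) (E (1,0,2)) (r * G1 a) - a*3⁻¹ * coeff (R := K) (E (3,0,0)) (r * G1 a) + a^2*4⁻¹ * coeff (R := K) (E (2,1,0)) (r * G1 a) - 3*a*4⁻¹ * coeff (R := K) (E (0,4,0)) (r * G1 a) = (0:K)
    simp only [G1, G2, G3, mul_add, mul_smul_comm, map_add, map_smul, smul_eq_mul,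
      coeff_rN]
    norm_num [Prod.mk_sub_mk]
    try field_simp
    try ring

lemma phi_rG2 (a : K) (h2 : (2:K) ≠ 0) (h3 : (3:K) ≠ 0) (r : MvPowerSeries (Fin 3) K) :
    phi a (r * G2 a) = 0 := by
  have h4 : (4:K) ≠ 0 := by
    have := mul_ne_zero h2 h2; norm_num at this; exact this
  funext i
  fin_cases i
  · show coeff (R := K) (E (0,0,0)) (r * G2 a) = (0:K)
    simp only [G1, G2, G3, mul_add, mul_smul_comm, map_add, map_smul, smul_eq_mul,
      coeff_rN]
    norm_num [Prod.mk_sub_mk]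
    try field_simp
    try ring
  · show coeff (R := K) (E (1,0,0)) (r * G2 a) = (0:K)
    simp only [G1, G2, G3, mul_add, mul_smul_comm, map_add, map_smul, smul_eq_mul,
      coeff_rN]
    norm_num [Prod.mk_sub_mk]
    try field_simp
    try ring
  · show coeff (R := K) (E (0,1,0)) (r * G2 a) = (0:K)
    simp only [G1, G2, G3, mul_add, mul_smul_comm, map_add, map_smul, smul_eq_mul,
      coeff_rN]
    norm_num [Prod.mk_sub_mk]
    try field_simp
    try ring
  · show coeff (R := K) (E (0,0,1)) (r * G2 a) = (0:K)
    simp only [G1, G2, G3, mul_add, mul_smul_comm, map_add, map_smul, smul_eq_mul,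
      coeff_rN]
    norm_num [Prod.mk_sub_mk]
    try field_simp
    try ring
  · show coeff (R := K) (E (1,1,0)) (r * G2 a) = (0:K)
    simp only [G1, G2, G3, mul_add, mul_smul_comm, map_add, map_smul, smul_eq_mul,
      coeff_rN]
    norm_num [Prod.mk_sub_mk]
    try field_simp
    try ring
  · show coeff (R := K) (E (0,2,0)) (r * G2 a) = (0:K)
    simp only [G1, G2, G3, mul_add, mul_smul_comm, map_add, map_smul, smul_eq_mul,
      coeff_rN]
    norm_num [Prod.mk_sub_mk]
    try field_simp
    try ring
  · show coeff (R := K) (E (1,0,1)) (r * G2 a) = (0:K)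
    simp only [G1, G2, G3, mul_add, mul_smul_comm, map_add, map_smul, smul_eq_mul,
      coeff_rN]
    norm_num [Prod.mk_sub_mk]
    try field_simp
    try ring
  · show coeff (R := K) (E (0,3,0)) (r * G2 a) - a*3⁻¹ * coeff (R := K) (E (2,0,0)) (r * G2 a) - 4 * coeff (R := K) (E (0,0,2)) (r * G2 a) = (0:K)
    simp only [G1, G2, G3, mul_add, mul_smul_comm, map_add, map_smul, smul_eq_mul,
      coeff_rN]
    norm_num [Prod.mk_sub_mk]
    try field_simp
    try ring
  · show coeff (R := K) (E (1,2,0)) (r * G2 a) - 3*a * coeff (R := K) (E (0,0,2)) (r * G2 a) = (0:K)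
    simp only [G1, G2, G3, mul_add, mul_smul_comm, map_add, map_smul, smul_eq_mul,
      coeff_rN]
    norm_num [Prod.mk_sub_mk]
    try field_simp
    try ring
  · show coeff (R := K) (E (1,3,0)) (r * G2 a) - 4 * coeff (R := K) (E (1,0,2)) (r * G2 a) - a*3⁻¹ * coeff (R := K) (E (3,0,0)) (r * G2 a) + a^2*4⁻¹ * coeff (R := K) (E (2,1,0)) (r * G2 a) - 3*a*4⁻¹ * coeff (R := K) (E (0,4,0)) (r * G2 a) = (0:K)
    simp only [G1, G2, G3, mul_add, mul_smul_comm, map_add, map_smul, smul_eq_mul,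
      coeff_rN]
    norm_num [Prod.mk_sub_mk]
    try field_simp
    try ring

lemma phi_rG3 (a : K) (h2 : (2:K) ≠ 0) (h3 : (3:K) ≠ 0) (r : MvPowerSeries (Fin 3) K) :
    phi a (r * (G3 : MvPowerSeries (Fin 3) K)) = 0 := by
  have h4 : (4:K) ≠ 0 := by
    have := mul_ne_zero h2 h2; norm_num at this; exact this
  funext i
  fin_cases i
  · show coeff (R := K) (E (0,0,0)) (r * (G3 : MvPowerSeries (Fin 3) K)) = (0:K)
    simp only [G1, G2, G3, mul_add, mul_smul_comm, map_add, map_smul, smul_eq_mul,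
      coeff_rN]
    norm_num [Prod.mk_sub_mk]
    try field_simp
    try ring
  · show coeff (R := K) (E (1,0,0)) (r * (G3 : MvPowerSeries (Fin 3) K)) = (0:K)
    simp only [G1, G2, G3, mul_add, mul_smul_comm, map_add, map_smul, smul_eq_mul,
      coeff_rN]
    norm_num [Prod.mk_sub_mk]
    try field_simp
    try ring
  · show coeff (R := K) (E (0,1,0)) (r * (G3 : MvPowerSeries (Fin 3) K)) = (0:K)
    simp only [G1, G2, G3, mul_add, mul_smul_comm, map_add, map_smul, smul_eq_mul,
      coeff_rN]
    norm_num [Prod.mk_sub_mk]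
    try field_simp
    try ring
  · show coeff (R := K) (E (0,0,1)) (r * (G3 : MvPowerSeries (Fin 3) K)) = (0:K)
    simp only [G1, G2, G3, mul_add, mul_smul_comm, map_add, map_smul, smul_eq_mul,
      coeff_rN]
    norm_num [Prod.mk_sub_mk]
    try field_simp
    try ring
  · show coeff (R := K) (E (1,1,0)) (r * (G3 : MvPowerSeries (Fin 3) K)) = (0:K)
    simp only [G1, G2, G3, mul_add, mul_smul_comm, map_add, map_smul, smul_eq_mul,
      coeff_rN]
    norm_num [Prod.mk_sub_mk]
    try field_simp
    try ring
  · show coeff (R := K) (E (0,2,0)) (r * (G3 : MvPowerSeries (Fin 3) K)) = (0:K)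
    simp only [G1, G2, G3, mul_add, mul_smul_comm, map_add, map_smul, smul_eq_mul,
      coeff_rN]
    norm_num [Prod.mk_sub_mk]
    try field_simp
    try ring
  · show coeff (R := K) (E (1,0,1)) (r * (G3 : MvPowerSeries (Fin 3) K)) = (0:K)
    simp only [G1, G2, G3, mul_add, mul_smul_comm, map_add, map_smul, smul_eq_mul,
      coeff_rN]
    norm_num [Prod.mk_sub_mk]
    try field_simp
    try ring
  · show coeff (R := K) (E (0,3,0)) (r * (G3 : MvPowerSeries (Fin 3) K)) - a*3⁻¹ * coeff (R := K) (E (2,0,0)) (r * (G3 : MvPowerSeries (Fin 3) K)) - 4 * coeff (R := K) (E (0,0,2)) (r * (G3 : MvPowerSeries (Fin 3) K)) = (0:K)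
    simp only [G1, G2, G3, mul_add, mul_smul_comm, map_add, map_smul, smul_eq_mul,
      coeff_rN]
    norm_num [Prod.mk_sub_mk]
    try field_simp
    try ring
  · show coeff (R := K) (E (1,2,0)) (r * (G3 : MvPowerSeries (Fin 3) K)) - 3*a * coeff (R := K) (E (0,0,2)) (r * (G3 : MvPowerSeries (Fin 3) K)) = (0:K)
    simp only [G1, G2, G3, mul_add, mul_smul_comm, map_add, map_smul, smul_eq_mul,
      coeff_rN]
    norm_num [Prod.mk_sub_mk]
    try field_simp
    try ring
  · show coeff (R := K) (E (1,3,0)) (r * (G3 : MvPowerSeries (Fin 3) K)) - 4 * coeff (R := K) (E (1,0,2)) (r * (G3 : MvPowerSeries (Fin 3) K)) - a*3⁻¹ * coeff (R := K) (E (3,0,0)) (r * (G3 : MvPowerSeries (Fin 3) K)) + a^2*4⁻¹ * coeff (R := K) (E (2,1,0)) (r * (G3 : MvPowerSeries (Fin 3) K)) - 3*a*4⁻¹ * coeff (R := K) (E (0,4,0)) (r * (G3 : MvPowerSeries (Fin 3) K)) = (0:K)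
    simp only [G1, G2, G3, mul_add, mul_smul_comm, map_add, map_smul, smul_eq_mul,
      coeff_rN]
    norm_num [Prod.mk_sub_mk]
    try field_simp
    try ring


lemma Jd_le_ker (a : K) (h2 : (2:K) ≠ 0) (h3 : (3:K) ≠ 0) :
    ∀ x ∈ Jd a, phi a x = 0 := by
  intro x hx
  rw [Jd] at hx
  rcases Ideal.mem_span_insert.mp hx with ⟨r1, z1, hz1, rfl⟩
  rcases Ideal.mem_span_insert.mp hz1 with ⟨r2, z2, hz2, rfl⟩
  rcases Ideal.mem_span_singleton.mp hz2 with ⟨r3, rfl⟩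
  rw [map_add, map_add, phi_rG1 a h2 h3 r1, phi_rG2 a h2 h3 r2, mul_comm (G3 : MvPowerSeries (Fin 3) K) r3,
    phi_rG3 a h2 h3 r3]
  simp

lemma sum_NF_eq (a : K) (f : MvPowerSeries (Fin 3) K) :
    ∑ t ∈ L35.toFinset, coeff (R := K) (E t) f • NFf a t
      = phi a f 0 • N (0,0,0) + phi a f 1 • N (1,0,0) + phi a f 2 • N (0,1,0)
      + phi a f 3 • N (0,0,1) + phi a f 4 • N (1,1,0) + phi a f 5 • N (0,2,0)
      + phi a f 6 • N (1,0,1) + phi a f 7 • N (0,3,0) + phi a f 8 • N (1,2,0)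
      + phi a f 9 • N (1,3,0) := by
  rw [List.sum_toFinset _ nodup35]
  simp only [L35, List.map_cons, List.map_nil, List.sum_cons, List.sum_nil, NFf,
    phi_app0, phi_app1, phi_app2, phi_app3, phi_app4, phi_app5, phi_app6, phi_app7,
    phi_app8, phi_app9]
  norm_num [Prod.ext_iff, B10]
  module

lemma ker_sub (a : K) (h2 : (2:K) ≠ 0) (h3 : (3:K) ≠ 0) (f : MvPowerSeries (Fin 3) K)
    (hker : phi a f = 0) : f ∈ Jd a := by
  classical
  have hfP : f - ∑ t ∈ L35.toFinset, coeff (R := K) (E t) f • N t ∈ Jd a := by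
    apply mem_order5 a h2 h3
    intro d hd
    rw [map_sub, map_sum]
    have hEd : d = E (d 0, d 1, d 2) := eq_E d
    have ht0 : (d 0, d 1, d 2) ∈ L35.toFinset := by
      rw [List.mem_toFinset]; exact mem_L35 _ _ _ (by omega)
    have hterm : ∀ t ∈ L35.toFinset,
        coeff (R := K) d (coeff (R := K) (E t) f • N t) = if t = (d 0, d 1, d 2) then coeff (R := K) d f else 0 := by
      intro t ht
      rw [map_smul, N, coeff_monomial]
      by_cases h : t = (d 0, d 1, d 2)
      · rw [if_pos (by rw [h]; exact hEd), if_pos h, smul_eq_mul, mul_one, h, ← hEd]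
      · rw [if_neg, if_neg h, smul_zero]
        intro hc
        exact h (E_eq_iff.mp (hc.symm.trans hEd))
    rw [Finset.sum_congr rfl hterm, Finset.sum_ite_eq' _ _ _, if_pos ht0, sub_self]
  have hsplit : (∑ t ∈ L35.toFinset, coeff (R := K) (E t) f • N t)
      = (∑ t ∈ L35.toFinset, coeff (R := K) (E t) f • (N t - NFf a t))
        + ∑ t ∈ L35.toFinset, coeff (R := K) (E t) f • NFf a t := by
    rw [← Finset.sum_add_distrib]
    apply Finset.sum_congr rfl
    intro t _
    module
  have hm1 : (∑ t ∈ L35.toFinset, coeff (R := K) (E t) f • (N t - NFf a t)) ∈ Jd a :=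
    Ideal.sum_mem _ fun t ht => smul_mem_I _ (sub_NF_mem a h2 h3 t (List.mem_toFinset.mp ht))
  have hm2 : (∑ t ∈ L35.toFinset, coeff (R := K) (E t) f • NFf a t) = 0 := by
    rw [sum_NF_eq]
    have h0 : ∀ i, phi a f i = 0 := fun i => congrFun hker i
    simp [h0]
  have hsum : f = (f - ∑ t ∈ L35.toFinset, coeff (R := K) (E t) f • N t)
      + ((∑ t ∈ L35.toFinset, coeff (R := K) (E t) f • (N t - NFf a t))
        + ∑ t ∈ L35.toFinset, coeff (R := K) (E t) f • NFf a t) := by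
    rw [← hsplit]; ring
  rw [hsum]
  exact Ideal.add_mem _ hfP (Ideal.add_mem _ hm1 (by rw [hm2]; exact Submodule.zero_mem _))

lemma phi_surj (a : K) : Function.Surjective (phi a) := by
  intro w
  set x : MvPowerSeries (Fin 3) K :=
    w 0 • N (0,0,0) + w 1 • N (1,0,0) + w 2 • N (0,1,0) + w 3 • N (0,0,1)
    + w 4 • N (1,1,0) + w 5 • N (0,2,0) + w 6 • N (1,0,1) + w 7 • N (0,3,0)
    + w 8 • N (1,2,0) + w 9 • N (1,3,0) with hx
  refine ⟨x, ?_⟩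
  funext i
  fin_cases i
  · show coeff (R := K) (E (0,0,0)) x = w 0
    rw [hx]; simp only [map_add, map_smul, coeff_N, smul_eq_mul]
    norm_num [Prod.ext_iff]
  · show coeff (R := K) (E (1,0,0)) x = w 1
    rw [hx]; simp only [map_add, map_smul, coeff_N, smul_eq_mul]
    norm_num [Prod.ext_iff]
  · show coeff (R := K) (E (0,1,0)) x = w 2
    rw [hx]; simp only [map_add, map_smul, coeff_N, smul_eq_mul]
    norm_num [Prod.ext_iff]
  · show coeff (R := K) (E (0,0,1)) x = w 3
    rw [hx]; simp only [map_add, map_smul, coeff_N, smul_eq_mul]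
    norm_num [Prod.ext_iff]
  · show coeff (R := K) (E (1,1,0)) x = w 4
    rw [hx]; simp only [map_add, map_smul, coeff_N, smul_eq_mul]
    norm_num [Prod.ext_iff]
  · show coeff (R := K) (E (0,2,0)) x = w 5
    rw [hx]; simp only [map_add, map_smul, coeff_N, smul_eq_mul]
    norm_num [Prod.ext_iff]
  · show coeff (R := K) (E (1,0,1)) x = w 6
    rw [hx]; simp only [map_add, map_smul, coeff_N, smul_eq_mul]
    norm_num [Prod.ext_iff]
  · show coeff (R := K) (E (0,3,0)) x - a*3⁻¹ * coeff (R := K) (E (2,0,0)) x - 4 * coeff (R := K) (E (0,0,2)) x = w 7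
    rw [hx]; simp only [map_add, map_smul, coeff_N, smul_eq_mul]
    norm_num [Prod.ext_iff]
  · show coeff (R := K) (E (1,2,0)) x - 3*a * coeff (R := K) (E (0,0,2)) x = w 8
    rw [hx]; simp only [map_add, map_smul, coeff_N, smul_eq_mul]
    norm_num [Prod.ext_iff]
  · show coeff (R := K) (E (1,3,0)) x - 4 * coeff (R := K) (E (1,0,2)) x - a*3⁻¹ * coeff (R := K) (E (3,0,0)) x
        + a^2*4⁻¹ * coeff (R := K) (E (2,1,0)) x - 3*a*4⁻¹ * coeff (R := K) (E (0,4,0)) x = w 9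
    rw [hx]; simp only [map_add, map_smul, coeff_N, smul_eq_mul]
    norm_num [Prod.ext_iff]

end Q10

theorem stmt16 (K : Type) [Field K] (p : ℕ) [CharP K p] (hp : 3 < p) (a : K) :
    milnor K (X (0 : Fin 3) ^ 3 + X 1 ^ 4 + X 1 * X 2 ^ 2
      + C (σ := Fin 3) (R := K) a * X 0 * X 1 ^ 3) = 10 := by
  open Q10 in
  have hprime : p.Prime := by
    rcases CharP.char_is_prime_or_zero K p with h | h
    · exact h
    · omega
  have hp5 : 5 ≤ p := by
    have h4 : p ≠ 4 := by
      intro h; rw [h] at hprime; norm_num at hprime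
    omega
  have h2 : (2:K) ≠ 0 := by
    intro h
    have hd : p ∣ 2 := (CharP.cast_eq_zero_iff K p 2).mp (by exact_mod_cast h)
    have := Nat.le_of_dvd (by norm_num) hd
    omega
  have h3 : (3:K) ≠ 0 := by
    intro h
    have hd : p ∣ 3 := (CharP.cast_eq_zero_iff K p 3).mp (by exact_mod_cast h)
    have := Nat.le_of_dvd (by norm_num) hd
    omega
  rw [milnor, Q10.F_eq a]
  have hrange : (Set.range fun i : Fin 3 => pd i (Q10.F a)) = {Q10.G1 a, Q10.G2 a, Q10.G3} := by
    ext g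
    simp only [Set.mem_range, Set.mem_insert_iff, Set.mem_singleton_iff]
    constructor
    · rintro ⟨i, rfl⟩
      fin_cases i
      · exact Or.inl (Q10.pdF0 a)
      · exact Or.inr (Or.inl (Q10.pdF1 a))
      · exact Or.inr (Or.inr (Q10.pdF2 a))
    · rintro (rfl | rfl | rfl)
      exacts [⟨0, Q10.pdF0 a⟩, ⟨1, Q10.pdF1 a⟩, ⟨2, Q10.pdF2 a⟩]
  rw [hrange]
  have hker : LinearMap.ker (Q10.phi a) = (Q10.Jd a).restrictScalars K := by
    ext x
    simp only [LinearMap.mem_ker, Submodule.restrictScalars_mem]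
    exact ⟨fun h => Q10.ker_sub a h2 h3 x h, fun h => Q10.Jd_le_ker a h2 h3 x h⟩
  have e : (MvPowerSeries (Fin 3) K ⧸ Q10.Jd a) ≃ₗ[K] (Fin 10 → K) :=
    ((Submodule.Quotient.restrictScalarsEquiv K ((Q10.Jd a) : Submodule (MvPowerSeries (Fin 3) K) (MvPowerSeries (Fin 3) K))).symm.trans
      (Submodule.quotEquivOfEq _ _ hker.symm)).trans
      ((Q10.phi a).quotKerEquivOfSurjective (Q10.phi_surj a))
  rw [show Ideal.span {Q10.G1 a, Q10.G2 a, Q10.G3} = Q10.Jd a from rfl]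
  rw [e.finrank_eq]
  simp [Module.finrank_pi]
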